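/- arXiv:2603.24778 — 3 statements merged into one kernel-verified Lean document; each statement's English description precedes it below -/
import Mathlib

section
/- For any Hermitian M×M complex matrix H and any Hermitian positive semi-definite M×M complex matrix Q, the inequality 0 ≤ 4·Tr[HQ]² + 4·Tr[H²Q]·Tr[Q] − 8·Tr[HQHQ] holds. -/
open Matrix
open scoped ComplexOrder

open Finset
open scoped Kronecker

section Aux

variable {n : Type*} [Fintype n] [DecidableEq n]

def swapF (n : Type*) [DecidableEq n] : Matrix (n × n) (n × n) ℂ :=
  Matrix.of fun p q => if p.1 = q.2 ∧ p.2 = q.1 then (1 : ℂ) else 0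

lemma swapF_conjTranspose : (swapF n)ᴴ = swapF n := by
  ext p q
  simp only [conjTranspose_apply, swapF, of_apply]
  split <;> split <;> simp_all <;> tauto

lemma swapF_mul_swapF : swapF n * swapF n = 1 := by
  ext p q
  simp only [mul_apply, swapF, of_apply, Fintype.sum_prod_type, mul_ite, mul_one, mul_zero,
    ite_and]
  simp only [Finset.sum_ite_irrel, Finset.sum_ite_eq, Finset.sum_ite_eq', Finset.sum_const_zero,
    Finset.mem_univ, if_true, one_apply, Prod.ext_iff]
  split <;> split <;> simp_all

lemma trace_kron_mul_swapF (A B : Matrix n n ℂ) :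
    ((A ⊗ₖ B) * swapF n).trace = (A * B).trace := by
  simp only [Matrix.trace, Matrix.diag_apply, mul_apply, swapF, of_apply,
    Fintype.sum_prod_type, kroneckerMap_apply, mul_ite, mul_one, mul_zero, ite_and]
  simp only [Finset.sum_ite_irrel, Finset.sum_ite_eq, Finset.sum_ite_eq', Finset.sum_const_zero,
    Finset.mem_univ, if_true]

lemma re_trace_nonneg {m : Type*} [Fintype m] (A : Matrix m m ℂ) : 0 ≤ (Aᴴ * A).trace.re := by
  have h : (Aᴴ * A).trace = ∑ i, ∑ j, (starRingEnd ℂ) (A j i) * A j i := by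
    simp [Matrix.trace, Matrix.diag_apply, mul_apply, conjTranspose_apply]
  rw [h, Complex.re_sum]
  refine Finset.sum_nonneg fun i _ => ?_
  rw [Complex.re_sum]
  refine Finset.sum_nonneg fun j _ => ?_
  rw [mul_comm, Complex.mul_conj]
  exact_mod_cast Complex.normSq_nonneg _

lemma kron_conjTranspose (A B : Matrix n n ℂ) : (A ⊗ₖ B)ᴴ = Aᴴ ⊗ₖ Bᴴ := by
  ext p q
  simp [conjTranspose_apply, kroneckerMap_apply, star_mul']

/-- The key two-copy inequality. -/
lemma key_ineq (X Y : Matrix n n ℂ) :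
    0 ≤ ((Xᴴ * Y).trace * (Yᴴ * X).trace + (Xᴴ * X).trace * (Yᴴ * Y).trace
        - (Xᴴ * X * (Yᴴ * Y)).trace - (Xᴴ * Y * (Yᴴ * X)).trace).re := by
  set F := swapF n with hFdef
  set W : Matrix (n × n) (n × n) ℂ := X ⊗ₖ Y + Y ⊗ₖ X with hW
  set V : Matrix (n × n) (n × n) ℂ := W - W * F with hV
  have hFh : Fᴴ = F := swapF_conjTranspose
  have hF2 : F * F = 1 := swapF_mul_swapF
  -- expand VᴴV
  have expand : Vᴴ * V = Wᴴ * W - Wᴴ * W * F - F * (Wᴴ * W) + F * (Wᴴ * W) * F := by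
    rw [hV, conjTranspose_sub, conjTranspose_mul, hFh]
    noncomm_ring
  have htr : (Vᴴ * V).trace
      = ((Wᴴ * W).trace - (Wᴴ * W * F).trace) + ((Wᴴ * W).trace - (Wᴴ * W * F).trace) := by
    rw [expand, trace_add, trace_sub, trace_sub]
    have h1 : (F * (Wᴴ * W)).trace = (Wᴴ * W * F).trace := trace_mul_comm _ _
    have h2 : (F * (Wᴴ * W) * F).trace = (Wᴴ * W).trace := by
      rw [trace_mul_cycle, ← Matrix.mul_assoc, hF2, Matrix.one_mul]
    rw [h1, h2]; ring
  -- compute the two traces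
  have hWW : Wᴴ * W = (Xᴴ * X) ⊗ₖ (Yᴴ * Y) + (Xᴴ * Y) ⊗ₖ (Yᴴ * X)
      + (Yᴴ * X) ⊗ₖ (Xᴴ * Y) + (Yᴴ * Y) ⊗ₖ (Xᴴ * X) := by
    rw [hW, conjTranspose_add, kron_conjTranspose, kron_conjTranspose,
      add_mul, mul_add, mul_add, ← mul_kronecker_mul, ← mul_kronecker_mul,
      ← mul_kronecker_mul, ← mul_kronecker_mul]
    abel
  have tWW : (Wᴴ * W).trace
      = (Xᴴ * X).trace * (Yᴴ * Y).trace + (Xᴴ * Y).trace * (Yᴴ * X).trace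
      + (Yᴴ * X).trace * (Xᴴ * Y).trace + (Yᴴ * Y).trace * (Xᴴ * X).trace := by
    rw [hWW, trace_add, trace_add, trace_add, trace_kronecker, trace_kronecker,
      trace_kronecker, trace_kronecker]
  have tWWF : (Wᴴ * W * F).trace
      = (Xᴴ * X * (Yᴴ * Y)).trace + (Xᴴ * Y * (Yᴴ * X)).trace
      + (Yᴴ * X * (Xᴴ * Y)).trace + (Yᴴ * Y * (Xᴴ * X)).trace := by
    rw [hWW, add_mul, add_mul, add_mul, trace_add, trace_add, trace_add,
      trace_kron_mul_swapF, trace_kron_mul_swapF, trace_kron_mul_swapF, trace_kron_mul_swapF]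
  have hnn := re_trace_nonneg V
  rw [htr, tWW, tWWF] at hnn
  have e1 : (Yᴴ * X).trace * (Xᴴ * Y).trace = (Xᴴ * Y).trace * (Yᴴ * X).trace := mul_comm _ _
  have e2 : (Yᴴ * Y).trace * (Xᴴ * X).trace = (Xᴴ * X).trace * (Yᴴ * Y).trace := mul_comm _ _
  have e3 : (Yᴴ * X * (Xᴴ * Y)).trace = (Xᴴ * Y * (Yᴴ * X)).trace := trace_mul_comm _ _
  have e4 : (Yᴴ * Y * (Xᴴ * X)).trace = (Xᴴ * X * (Yᴴ * Y)).trace := trace_mul_comm _ _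
  rw [e1, e2, e3, e4] at hnn
  set t : ℂ := (Xᴴ * Y).trace * (Yᴴ * X).trace + (Xᴴ * X).trace * (Yᴴ * Y).trace
        - (Xᴴ * X * (Yᴴ * Y)).trace - (Xᴴ * Y * (Yᴴ * X)).trace with ht
  have : ((Xᴴ * X).trace * (Yᴴ * Y).trace + (Xᴴ * Y).trace * (Yᴴ * X).trace +
        (Xᴴ * Y).trace * (Yᴴ * X).trace + (Xᴴ * X).trace * (Yᴴ * Y).trace -
        ((Xᴴ * X * (Yᴴ * Y)).trace + (Xᴴ * Y * (Yᴴ * X)).trace +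
        (Xᴴ * Y * (Yᴴ * X)).trace + (Xᴴ * X * (Yᴴ * Y)).trace)
        + ((Xᴴ * X).trace * (Yᴴ * Y).trace + (Xᴴ * Y).trace * (Yᴴ * X).trace +
        (Xᴴ * Y).trace * (Yᴴ * X).trace + (Xᴴ * X).trace * (Yᴴ * Y).trace -
        ((Xᴴ * X * (Yᴴ * Y)).trace + (Xᴴ * Y * (Yᴴ * X)).trace +
        (Xᴴ * Y * (Yᴴ * X)).trace + (Xᴴ * X * (Yᴴ * Y)).trace))) = t + t + t + t := by
    rw [ht]; ring
  rw [this] at hnn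
  simp only [Complex.add_re] at hnn
  linarith

lemma keyB {m : Type*} [Fintype m] (C : Matrix m m ℂ) :
    (C * C).trace.re ≤ (Cᴴ * C).trace.re := by
  have hnn := re_trace_nonneg (C - Cᴴ)
  have expand : (C - Cᴴ)ᴴ * (C - Cᴴ) = Cᴴ * C - Cᴴ * Cᴴ - C * C + C * Cᴴ := by
    rw [conjTranspose_sub, conjTranspose_conjTranspose]
    noncomm_ring
  have h1 : (C * Cᴴ).trace = (Cᴴ * C).trace := trace_mul_comm _ _
  have h2 : (Cᴴ * Cᴴ).trace.re = (C * C).trace.re := by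
    rw [← conjTranspose_mul, trace_conjTranspose]
    exact Complex.conj_re _
  rw [expand, trace_add, trace_sub, trace_sub, h1] at hnn
  simp only [Complex.add_re, Complex.sub_re] at hnn
  rw [h2] at hnn
  linarith

end Aux

/-- For any Hermitian M×M complex matrix H and any Hermitian positive semi-definite
M×M complex matrix Q, 0 ≤ 4·Tr[HQ]² + 4·Tr[H²Q]·Tr[Q] − 8·Tr[HQHQ]
(the expression is real, so we state nonnegativity of its real part). -/
theorem stmt_0 (M : ℕ) (hM : 0 < M)
    (H Q : Matrix (Fin M) (Fin M) ℂ)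
    (hH : H.IsHermitian) (hQ : Q.PosSemidef) :
    0 ≤ (4 * ((H * Q).trace) ^ 2 + 4 * ((H ^ 2 * Q).trace) * Q.trace
        - 8 * ((H * Q * H * Q).trace)).re := by
  set S : Matrix (Fin M) (Fin M) ℂ := (open scoped MatrixOrder in CFC.sqrt Q) with hSdef
  have hS2 : S * S = Q := by open scoped MatrixOrder in exact CFC.sqrt_mul_sqrt_self Q hQ.nonneg
  have hSH : Sᴴ = S := by open scoped MatrixOrder in exact (CFC.sqrt_nonneg Q).posSemidef.isHermitian
  have hQH : Qᴴ = Q := hQ.isHermitian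
  have hHh : Hᴴ = H := hH
  have tr_rot : ∀ A B : Matrix (Fin M) (Fin M) ℂ, (A * B).trace = (B * A).trace :=
    fun A B => trace_mul_comm A B
  have a1 : ((H * S)ᴴ * S).trace = (H * Q).trace := by
    rw [conjTranspose_mul, hSH, hHh]
    simp only [Matrix.mul_assoc]
    rw [tr_rot]
    simp only [Matrix.mul_assoc, hS2]
  have a2 : (Sᴴ * (H * S)).trace = (H * Q).trace := by
    rw [hSH, tr_rot]
    simp only [Matrix.mul_assoc, hS2]
  have a3 : ((H * S)ᴴ * (H * S)).trace = (H ^ 2 * Q).trace := by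
    rw [conjTranspose_mul, hSH, hHh, sq]
    simp only [Matrix.mul_assoc]
    rw [tr_rot]
    simp only [Matrix.mul_assoc, hS2]
  have a4 : (Sᴴ * S).trace = Q.trace := by rw [hSH, hS2]
  have a5 : ((H * S)ᴴ * S * (Sᴴ * (H * S))).trace = (H * Q * H * Q).trace := by
    rw [conjTranspose_mul, hSH, hHh, show (H : Matrix (Fin M) (Fin M) ℂ) * Q * H * Q
      = H * (S * (S * (H * (S * S)))) by rw [← hS2]; simp only [Matrix.mul_assoc]]
    simp only [Matrix.mul_assoc]
    rw [tr_rot]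
    simp only [Matrix.mul_assoc]
  have a6 : ((H * S)ᴴ * (H * S) * (Sᴴ * S)).trace = ((H * Q)ᴴ * (H * Q)).trace := by
    rw [conjTranspose_mul H S, conjTranspose_mul H Q, hSH, hHh, hQH, ← hS2]
    simp only [Matrix.mul_assoc]
    conv_rhs => rw [tr_rot]
    simp only [Matrix.mul_assoc]
  have hA := key_ineq (H * S) S
  rw [a1, a2, a3, a4, a5, a6] at hA
  have hB := keyB (H * Q)
  have b1 : (H * Q * (H * Q)).trace = (H * Q * H * Q).trace := by
    simp only [Matrix.mul_assoc]
  rw [b1] at hB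
  set z1 : ℂ := (H * Q).trace
  set z2 : ℂ := (H ^ 2 * Q).trace
  set z3 : ℂ := Q.trace
  set z4 : ℂ := (H * Q * H * Q).trace
  set U : ℂ := ((H * Q)ᴴ * (H * Q)).trace
  have key : 4 * z1 ^ 2 + 4 * z2 * z3 - 8 * z4
      = 4 * (z1 * z1 + z2 * z3 - U - z4) + 4 * (U - z4) := by ring
  rw [key]
  simp only [Complex.add_re, Complex.mul_re, Complex.sub_re, Complex.re_ofNat,
    Complex.im_ofNat, Complex.sub_im, zero_mul, sub_zero] at hA ⊢
  linarith
end

section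
/- Under the hypotheses of the optimal two-mode squeezed state (s_i² = (N/2)(1 − q), s_j² = (N/2)(1 + q) with q = ḡ/√(ḡ²+Δg²), g_i = ḡ − Δg√(s_j²/s_i²), g_j = ḡ + Δg√(s_i²/s_j²), Δg > 0, N > 0), the quantity F := 8 g_i² s_i²(s_i²+1) + 8 g_j² s_j²(s_j²+1) equals exactly 8ḡ²N² + 4Δg²N² + 8(ḡ² + Δg²)N. -/
/-- QFI of the optimal two-mode squeezed state:
F = 8 g_i² s_i²(s_i²+1) + 8 g_j² s_j²(s_j²+1) = 8ḡ²N² + 4Δg²N² + 8(ḡ²+Δg²)N. -/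
theorem stmt_7 (N gbar Δg : ℝ) (hN : 0 < N) (hΔg : 0 < Δg)
    (q si2 sj2 gi gj : ℝ)
    (hq : q = gbar / Real.sqrt (gbar ^ 2 + Δg ^ 2))
    (hsi2 : si2 = (N / 2) * (1 - q))
    (hsj2 : sj2 = (N / 2) * (1 + q))
    (hgi : gi = gbar - Δg * Real.sqrt (sj2 / si2))
    (hgj : gj = gbar + Δg * Real.sqrt (si2 / sj2)) :
    8 * gi ^ 2 * si2 * (si2 + 1) + 8 * gj ^ 2 * sj2 * (sj2 + 1)
      = 8 * gbar ^ 2 * N ^ 2 + 4 * Δg ^ 2 * N ^ 2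
        + 8 * (gbar ^ 2 + Δg ^ 2) * N := by
  set r := Real.sqrt (gbar ^ 2 + Δg ^ 2) with hr
  have hs : (0:ℝ) < gbar ^ 2 + Δg ^ 2 := by positivity
  have hrpos : 0 < r := Real.sqrt_pos.mpr hs
  have hr2 : r ^ 2 = gbar ^ 2 + Δg ^ 2 := Real.sq_sqrt hs.le
  have hlt : gbar < r := by nlinarith [hr2, hrpos, hΔg]
  have hgt : -r < gbar := by nlinarith [hr2, hrpos, hΔg]
  have hq1 : q < 1 := by rw [hq]; exact (div_lt_one hrpos).mpr hlt
  have hq2 : -1 < q := by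
    rw [hq]
    rw [lt_div_iff₀ hrpos]
    linarith
  have hqr : q * r = gbar := by
    rw [hq]; field_simp
  have hkey : r ^ 2 * (1 - q) * (1 + q) = Δg ^ 2 := by
    linear_combination hr2 - (q * r + gbar) * hqr
  have h1q : (0:ℝ) < 1 - q := by linarith
  have h1q' : (0:ℝ) < 1 + q := by linarith
  have hratio1 : sj2 / si2 = (r * (1 + q) / Δg) ^ 2 := by
    rw [hsi2, hsj2]
    field_simp
    linear_combination -hkey
  have hratio2 : si2 / sj2 = (r * (1 - q) / Δg) ^ 2 := by
    rw [hsi2, hsj2]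
    field_simp
    linear_combination -hkey
  have hsq1 : Real.sqrt (sj2 / si2) = r * (1 + q) / Δg := by
    rw [hratio1, Real.sqrt_sq (by positivity)]
  have hsq2 : Real.sqrt (si2 / sj2) = r * (1 - q) / Δg := by
    rw [hratio2, Real.sqrt_sq (by positivity)]
  have hgi' : gi = -r := by
    rw [hgi, hsq1]
    field_simp
    linarith [hqr]
  have hgj' : gj = r := by
    rw [hgj, hsq2]
    field_simp
    linarith [hqr]
  rw [hgi', hgj', hsi2, hsj2]
  linear_combination (4*N^2 + 8*N) * hr2 + 4*N^2*(q*r + gbar) * hqr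
end

section
/- Homodyne Fisher information optimization: for r > 0, g ≠ 0, the function F(φ) = 2g²·sinh²(2r)·sin²(2(gλ+φ)) / (cosh(2r) + sinh(2r)·cos(2(gλ+φ)))² attains its maximum value 8g²·sinh²(r)·(sinh²(r)+1) at the phase φ = (1/2)·arccos(tanh(2r)) − gλ + π/2. -/
open Real

/-- Homodyne Fisher information optimization: for r > 0 and g ≠ 0, the function
F(φ) = 2g² sinh²(2r) sin²(2(gλ+φ)) / (cosh(2r) + sinh(2r) cos(2(gλ+φ)))²
attains its maximum value 8g² sinh²(r)(sinh²(r)+1) at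
φ = (1/2)·arccos(tanh(2r)) − gλ + π/2. -/
theorem stmt_15 (r g lam : ℝ) (hr : 0 < r) (hg : g ≠ 0) :
    let F : ℝ → ℝ := fun φ =>
      2 * g ^ 2 * Real.sinh (2 * r) ^ 2 * Real.sin (2 * (g * lam + φ)) ^ 2 /
        (Real.cosh (2 * r) + Real.sinh (2 * r) * Real.cos (2 * (g * lam + φ))) ^ 2
    let φopt : ℝ := (1 / 2) * Real.arccos (Real.tanh (2 * r)) - g * lam + Real.pi / 2
    F φopt = 8 * g ^ 2 * Real.sinh r ^ 2 * (Real.sinh r ^ 2 + 1) ∧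
    ∀ φ : ℝ, F φ ≤ 8 * g ^ 2 * Real.sinh r ^ 2 * (Real.sinh r ^ 2 + 1) := by
  intro F φopt
  have hs : 0 < Real.sinh (2 * r) := Real.sinh_pos_iff.mpr (by linarith)
  have hsc : Real.sinh (2 * r) < Real.cosh (2 * r) := Real.sinh_lt_cosh _
  have hc : 0 < Real.cosh (2 * r) := lt_trans hs hsc
  have hid : Real.cosh (2 * r) ^ 2 - Real.sinh (2 * r) ^ 2 = 1 := by
    have := Real.cosh_sq_sub_sinh_sq (2 * r); nlinarith
  have hdouble : Real.sinh (2 * r) = 2 * Real.sinh r * Real.cosh r :=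
    Real.sinh_two_mul r
  have hcoshr : Real.cosh r ^ 2 = Real.sinh r ^ 2 + 1 := by
    have := Real.cosh_sq_sub_sinh_sq r; nlinarith
  have hRHS : 8 * g ^ 2 * Real.sinh r ^ 2 * (Real.sinh r ^ 2 + 1)
      = 2 * g ^ 2 * Real.sinh (2 * r) ^ 2 := by
    rw [hdouble]; linear_combination (-8 * g ^ 2 * Real.sinh r ^ 2) * hcoshr
  have ht : Real.tanh (2 * r) = Real.sinh (2 * r) / Real.cosh (2 * r) :=
    Real.tanh_eq_sinh_div_cosh _
  have ht1 : Real.tanh (2 * r) ≤ 1 := by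
    rw [ht, div_le_one hc]; linarith
  have ht2 : -1 ≤ Real.tanh (2 * r) := by
    rw [ht]
    have h0 : 0 ≤ Real.sinh (2 * r) / Real.cosh (2 * r) := by positivity
    linarith
  constructor
  · -- value at the optimum
    show 2 * g ^ 2 * Real.sinh (2 * r) ^ 2 * Real.sin (2 * (g * lam + φopt)) ^ 2 /
        (Real.cosh (2 * r) + Real.sinh (2 * r) * Real.cos (2 * (g * lam + φopt))) ^ 2
        = 8 * g ^ 2 * Real.sinh r ^ 2 * (Real.sinh r ^ 2 + 1)
    have hθ : 2 * (g * lam + φopt) = Real.arccos (Real.tanh (2 * r)) + π := by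
      show 2 * (g * lam + ((1 / 2) * Real.arccos (Real.tanh (2 * r)) - g * lam + π / 2))
          = Real.arccos (Real.tanh (2 * r)) + π
      ring
    have hcos : Real.cos (2 * (g * lam + φopt)) = - (Real.sinh (2 * r) / Real.cosh (2 * r)) := by
      rw [hθ, Real.cos_add_pi, Real.cos_arccos ht2 ht1, ht]
    have hsin : Real.sin (2 * (g * lam + φopt)) ^ 2
        = 1 - (Real.sinh (2 * r) / Real.cosh (2 * r)) ^ 2 := by
      rw [Real.sin_sq, hcos]; ring
    rw [hsin, hcos, hRHS]
    have hden : Real.cosh (2 * r) + Real.sinh (2 * r) *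
        -(Real.sinh (2 * r) / Real.cosh (2 * r)) = 1 / Real.cosh (2 * r) := by
      field_simp; nlinarith
    rw [hden]
    field_simp
    linarith [hid]
  · intro φ
    show 2 * g ^ 2 * Real.sinh (2 * r) ^ 2 * Real.sin (2 * (g * lam + φ)) ^ 2 /
        (Real.cosh (2 * r) + Real.sinh (2 * r) * Real.cos (2 * (g * lam + φ))) ^ 2
        ≤ 8 * g ^ 2 * Real.sinh r ^ 2 * (Real.sinh r ^ 2 + 1)
    rw [hRHS]
    set x := Real.cos (2 * (g * lam + φ)) with hx
    have hx1 : -1 ≤ x := Real.neg_one_le_cos _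
    have hx2 : x ≤ 1 := Real.cos_le_one _
    have hsin : Real.sin (2 * (g * lam + φ)) ^ 2 = 1 - x ^ 2 := by
      rw [Real.sin_sq]
    have hdenpos : 0 < Real.cosh (2 * r) + Real.sinh (2 * r) * x := by nlinarith
    rw [hsin, div_le_iff₀ (by positivity)]
    have hsq : (0:ℝ) ≤ 1 - x ^ 2 := by nlinarith
    have key : 1 - x ^ 2 ≤ (Real.cosh (2 * r) + Real.sinh (2 * r) * x) ^ 2 := by
      nlinarith [sq_nonneg (Real.sinh (2 * r) + Real.cosh (2 * r) * x), hsq, hid]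
    have hmul := mul_le_mul_of_nonneg_left key
      (by positivity : (0:ℝ) ≤ 2 * g ^ 2 * Real.sinh (2 * r) ^ 2)
    linarith
end
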